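/- Let Y ∼ N(0, γ) with γ > 0, a ∈ ℝ, ρ ∈ (0,1), and Φ the standard normal CDF. Then E[Φ(a + Y)·1_{Φ(a+Y) < ρ}] = Φ₂((a, Φ⁻¹(ρ) − a); [[1+γ, −γ],[−γ, γ]]), where Φ₂(v; Σ) denotes P(W₁ ≤ v₁, W₂ ≤ v₂) for (W₁,W₂) centered bivariate Gaussian with covariance Σ. -/

import Mathlib

open MeasureTheory ProbabilityTheory Set
open scoped ENNReal

lemma gaussian_cdf_strictMono : StrictMono (cdf (gaussianReal 0 1)) := by
  intro x y hxy
  have h1 : (1 : NNReal) ≠ 0 := one_ne_zero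
  rw [cdf_eq_real, cdf_eq_real, measureReal_def, measureReal_def]
  have hsub : Iic x ⊆ Iic y := Iic_subset_Iic.2 hxy.le
  have hne : gaussianReal 0 1 (Ioc x y) ≠ 0 := by
    intro h0
    have := (gaussianReal_absolutelyContinuous' 0 h1) h0
    rw [Real.volume_Ioc] at this
    simp only [ENNReal.ofReal_eq_zero, sub_nonpos] at this
    linarith
  have hdecomp : Iic x ∪ Ioc x y = Iic y := Iic_union_Ioc_eq_Iic hxy.le
  have hlt : gaussianReal 0 1 (Iic x) < gaussianReal 0 1 (Iic y) := by
    rw [← hdecomp, measure_union (by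
      rw [Set.disjoint_left]
      intro z hz hz'
      exact absurd (mem_Iic.1 hz) (not_le.2 (mem_Ioc.1 hz').1)) measurableSet_Ioc]
    exact ENNReal.lt_add_right (measure_ne_top _ _) hne
  exact ENNReal.toReal_strict_mono (measure_ne_top _ _) hlt

/-- For `Y ∼ N(0,γ)` with `γ > 0`, `ρ ∈ (0,1)` and `Φ` the standard normal CDF,
`E[Φ(a + Y)·1_{Φ(a+Y) < ρ}] = Φ₂((a, Φ⁻¹(ρ) − a); [[1+γ, −γ],[−γ, γ]])`, where the
bivariate Gaussian CDF is realized by the pair `(N₁ − Y, Y)` for `N₁ ∼ N(0,1)`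
independent of `Y`: the expectation equals `P(N₁ − Y ≤ a, Y ≤ Φ⁻¹(ρ) − a)`. -/
theorem expectation_truncated_coverage_eq_bivariate_cdf
    {Ω : Type*} [MeasurableSpace Ω] (P : Measure Ω) [IsProbabilityMeasure P]
    (Y N₁ : Ω → ℝ) (hYm : Measurable Y) (hNm : Measurable N₁)
    (γ : ℝ) (hγ : 0 < γ)
    (hY : Measure.map Y P = gaussianReal 0 γ.toNNReal)
    (hN : Measure.map N₁ P = gaussianReal 0 1)
    (hindep : IndepFun N₁ Y P)
    (Φ : ℝ → ℝ) (hΦ : ∀ x, Φ x = cdf (gaussianReal 0 1) x)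
    (a ρ : ℝ) (hρ : ρ ∈ Ioo (0 : ℝ) 1)
    (s : ℝ) (hs : Φ s = ρ) :
    ∫ ω, Φ (a + Y ω) * {ω' | Φ (a + Y ω') < ρ}.indicator (fun _ => (1 : ℝ)) ω ∂P
      = (P {ω | N₁ ω - Y ω ≤ a ∧ Y ω ≤ s - a}).toReal := by
  set ν : Measure ℝ := gaussianReal 0 1 with hν
  set μ : Measure ℝ := gaussianReal 0 γ.toNNReal with hμ
  have hγ0 : γ.toNNReal ≠ 0 := by
    simp [Real.toNNReal_eq_zero, not_le, hγ]
  haveI : NoAtoms μ := by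
    constructor
    intro x
    refine (gaussianReal_absolutelyContinuous 0 hγ0) ?_
    exact measure_singleton x
  -- the truncation condition is `Y ω < s - a`
  have hcrit : ∀ y : ℝ, Φ (a + y) < ρ ↔ y < s - a := by
    intro y
    rw [hΦ, ← hs, hΦ, gaussian_cdf_strictMono.lt_iff_lt]
    constructor <;> intro h <;> linarith
  have hmeasΦ : Measurable (cdf ν) := (monotone_cdf ν).measurable
  -- rewrite LHS as an integral against μ
  set g : ℝ → ℝ := (Iio (s - a)).indicator (fun y => cdf ν (a + y)) with hg
  have hgmeas : Measurable g :=
    ((hmeasΦ.comp (measurable_const.add measurable_id)).indicator measurableSet_Iio)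
  have hstep1 : ∀ ω, Φ (a + Y ω) * {ω' | Φ (a + Y ω') < ρ}.indicator (fun _ => (1 : ℝ)) ω
      = g (Y ω) := by
    intro ω
    by_cases h : Y ω < s - a
    · have h' : Φ (a + Y ω) < ρ := (hcrit (Y ω)).2 h
      rw [Set.indicator_of_mem (show ω ∈ {ω' | Φ (a + Y ω') < ρ} from h'), hg,
        Set.indicator_of_mem (show Y ω ∈ Iio (s - a) from h), hΦ, mul_one]
    · have h' : ¬ Φ (a + Y ω) < ρ := fun hh => h ((hcrit (Y ω)).1 hh)
      rw [Set.indicator_of_notMem (show ω ∉ {ω' | Φ (a + Y ω') < ρ} from h'), hg,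
        Set.indicator_of_notMem (show Y ω ∉ Iio (s - a) from h), mul_zero]
  have hLHS : ∫ ω, Φ (a + Y ω) * {ω' | Φ (a + Y ω') < ρ}.indicator (fun _ => (1 : ℝ)) ω ∂P
      = ∫ y, g y ∂μ := by
    simp_rw [hstep1]
    rw [← hY]
    exact (integral_map hYm.aemeasurable hgmeas.aestronglyMeasurable).symm
  rw [hLHS]
  -- compute the integral against μ as a lintegral
  have hIio : ∫ y, g y ∂μ = ∫ y in Iio (s - a), cdf ν (a + y) ∂μ := by
    rw [hg, integral_indicator measurableSet_Iio]
  have hIic : ∫ y in Iio (s - a), cdf ν (a + y) ∂μ = ∫ y in Iic (s - a), cdf ν (a + y) ∂μ :=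
    setIntegral_congr_set (Iio_ae_eq_Iic' ((gaussianReal_absolutelyContinuous 0 hγ0) (measure_singleton _)))
  have hfun : ∀ y : ℝ, cdf ν (a + y) = (ν (Iic (a + y))).toReal := fun y => by rw [cdf_eq_real, measureReal_def]
  have hlin : ∫ y in Iic (s - a), cdf ν (a + y) ∂μ
      = (∫⁻ y in Iic (s - a), ν (Iic (a + y)) ∂μ).toReal := by
    simp_rw [hfun]
    rw [integral_toReal]
    · have : AEMeasurable (fun y => ν (Iic (a + y))) (μ.restrict (Iic (s - a))) := by
        have : (fun y => ν (Iic (a + y))) = fun y => ENNReal.ofReal (cdf ν (a + y)) := by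
          funext y; rw [ofReal_cdf]
        rw [this]
        exact (ENNReal.measurable_ofReal.comp
          (hmeasΦ.comp (measurable_const.add measurable_id))).aemeasurable
      exact this
    · exact ae_of_all _ fun y => measure_lt_top ν _
  rw [hIio, hIic, hlin]
  -- now compute the RHS
  have hpairmeas : Measurable fun ω => (N₁ ω, Y ω) := hNm.prodMk hYm
  have hmap : Measure.map (fun ω => (N₁ ω, Y ω)) P = ν.prod μ := by
    rw [(indepFun_iff_map_prod_eq_prod_map_map hNm.aemeasurable hYm.aemeasurable).1 hindep,
      hN, hY]
  have hTmeas : MeasurableSet {p : ℝ × ℝ | p.1 - p.2 ≤ a ∧ p.2 ≤ s - a} := by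
    apply MeasurableSet.inter
    · exact measurableSet_le (measurable_fst.sub measurable_snd) measurable_const
    · exact measurableSet_le measurable_snd measurable_const
  have hRHS : P {ω | N₁ ω - Y ω ≤ a ∧ Y ω ≤ s - a}
      = (ν.prod μ) {p : ℝ × ℝ | p.1 - p.2 ≤ a ∧ p.2 ≤ s - a} := by
    rw [← hmap, Measure.map_apply hpairmeas hTmeas]
    rfl
  rw [hRHS, Measure.prod_apply_symm hTmeas]
  congr 1
  have this : ∀ y : ℝ, ν ((fun x => (x, y)) ⁻¹' {p : ℝ × ℝ | p.1 - p.2 ≤ a ∧ p.2 ≤ s - a})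
      = (Iic (s - a)).indicator (fun y' => ν (Iic (a + y'))) y := by
    intro y
    by_cases h : y ≤ s - a
    · rw [Set.indicator_of_mem (show y ∈ Iic (s - a) from h)]
      congr 1
      ext x
      simp only [mem_preimage, mem_setOf_eq, mem_Iic]
      constructor
      · rintro ⟨h1, _⟩; linarith
      · intro h1; exact ⟨by linarith, h⟩
    · rw [Set.indicator_of_notMem (show y ∉ Iic (s - a) from h)]
      have : ((fun x => (x, y)) ⁻¹' {p : ℝ × ℝ | p.1 - p.2 ≤ a ∧ p.2 ≤ s - a}) = ∅ := by
        ext x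
        simp only [mem_preimage, mem_setOf_eq, mem_empty_iff_false, iff_false]
        rintro ⟨_, h2⟩; exact h h2
      rw [this, measure_empty]
  simp_rw [this]
  rw [lintegral_indicator measurableSet_Iic]
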